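/- Under the L-smad property of (f, φ) with scaling exponent ν (i.e., f(x) − f(x₊) ≥ γ⟨∇f(x), x−v⟩ − Lγ^{1+ν}D_φ(v,x) for x₊ = (1−γ)x + γv), if 0 ≤ γ ≤ (⟨∇f(x), x − v⟩ / (L(1+ν) D_φ(v, x)))^{1/ν} with ⟨∇f(x), x − v⟩ ≥ 0, then f(x) − f(x₊) ≥ (ν/(1+ν)) · γ · ⟨∇f(x), x − v⟩. -/

import Mathlib

open Set
open scoped RealInnerProductSpace

noncomputable def bregman {n : ℕ} (φ : EuclideanSpace ℝ (Fin n) → ℝ)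
    (φ' : EuclideanSpace ℝ (Fin n) → EuclideanSpace ℝ (Fin n))
    (x y : EuclideanSpace ℝ (Fin n)) : ℝ :=
  φ x - φ y - ⟪φ' y, x - y⟫

/-- progress from the Bregman short step-size. If the descent inequality
`f x - f x₊ ≥ γ⟨∇f x, x - v⟩ - Lγ^(1+ν)D_φ(v,x)` holds (for `x₊ = (1-γ)x + γv`,
`γ ∈ [0,1]`), then for any step-size `γ` with
`0 ≤ γ ≤ (⟨∇f x, x - v⟩/(L(1+ν)D_φ(v,x)))^(1/ν)` (and `γ ≤ 1`),
`f x - f x₊ ≥ (ν/(1+ν)) γ ⟨∇f x, x - v⟩`. -/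
theorem bregman_short_step_progress {n : ℕ}
    (φ f : EuclideanSpace ℝ (Fin n) → ℝ)
    (φ' f' : EuclideanSpace ℝ (Fin n) → EuclideanSpace ℝ (Fin n))
    (x v : EuclideanSpace ℝ (Fin n))
    (L ν : ℝ) (hL : 0 < L) (hν : 0 < ν)
    (hD : 0 < bregman φ φ' v x)
    (hg : 0 ≤ ⟪f' x, x - v⟫)
    (hdescent : ∀ γ ∈ Icc (0:ℝ) 1,
      f x - f ((1 - γ) • x + γ • v) ≥
        γ * ⟪f' x, x - v⟫ - L * γ ^ (1 + ν) * bregman φ φ' v x)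
    (γ : ℝ) (hγ : γ ∈ Icc (0:ℝ) 1)
    (hγle : γ ≤ (⟪f' x, x - v⟫ / (L * (1 + ν) * bregman φ φ' v x)) ^ (1 / ν)) :
    f x - f ((1 - γ) • x + γ • v) ≥ (ν / (1 + ν)) * γ * ⟪f' x, x - v⟫ := by
  set g := ⟪f' x, x - v⟫ with hgdef
  set D := bregman φ φ' v x with hDdef
  have h1ν : (0:ℝ) < 1 + ν := by linarith
  have hmain := hdescent γ hγ
  have key : L * γ ^ (1 + ν) * D ≤ (1 / (1 + ν)) * γ * g := by
    rcases eq_or_lt_of_le hγ.1 with h0 | h0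
    · rw [← h0]
      rw [Real.zero_rpow (by positivity)]
      ring_nf
      simp
    · have hbase : 0 ≤ g / (L * (1 + ν) * D) := by positivity
      have hpow : γ ^ ν ≤ g / (L * (1 + ν) * D) := by
        have := Real.rpow_le_rpow h0.le hγle hν.le
        rwa [← Real.rpow_mul hbase, one_div, inv_mul_cancel₀ hν.ne',
          Real.rpow_one] at this
      have hsplit : γ ^ (1 + ν) = γ * γ ^ ν := by
        rw [Real.rpow_add h0, Real.rpow_one]
      rw [hsplit]
      have h2 : L * (1 + ν) * D * γ ^ ν ≤ g := by
        have hpos : (0:ℝ) < L * (1 + ν) * D := by positivity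
        calc L * (1 + ν) * D * γ ^ ν ≤ L * (1 + ν) * D * (g / (L * (1 + ν) * D)) :=
              by exact mul_le_mul_of_nonneg_left hpow hpos.le
          _ = g := by field_simp
      have := mul_le_mul_of_nonneg_left h2 h0.le
      calc L * (γ * γ ^ ν) * D = γ * (L * (1 + ν) * D * γ ^ ν) / (1 + ν) := by
            field_simp
        _ ≤ γ * g / (1 + ν) := by
            gcongr
        _ = (1 / (1 + ν)) * γ * g := by ring
  have : γ * g - L * γ ^ (1 + ν) * D ≥ (ν / (1 + ν)) * γ * g := by
    have : (ν / (1 + ν)) * γ * g = γ * g - (1 / (1 + ν)) * γ * g := by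
      field_simp; ring
    rw [this]; linarith
  linarith
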